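/- Existence of centroid-respecting radii for the circular covering: There exists a universal constant Θ > 1 such that for every even integer m ≥ 6 and every ρ > 0, there exist radii 0 = r₀ ≤ r₁ ≤ r₂ ≤ … ≤ r_{m/2+1} satisfying r_j ≤ 2ρ·sin(jπ/m) ≤ r_{j+1} for all j ∈ {1,…,m/2}, such that for every j ∈ {1,…,m/2} and ℓ ∈ {1,…,m} with 2ρ·sin(jπ/m) ≤ Θρ, the point q_{jℓ} = 2ρ·sin(jπ/m)·e^{i(j+2ℓ)π/m} ∈ ℂ is the centroid of the sector I_{jℓ} = {r·e^{iθ} : r_j < r < r_{j+1}, |θ − (j+2ℓ)π/m| < π/m} ⊂ ℂ, i.e. (∫_{I_{jℓ}} z dA(z)) / |I_{jℓ}| = q_{jℓ}. -/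

import Mathlib

open MeasureTheory Real Complex Set

noncomputable section


lemma aux_root (c a s t b : ℝ) (hc0 : 0 < c) (hc : c ≤ 2/3) (ha0 : 0 ≤ a) (has : a ≤ s)
    (hs : 0 < s) (ht0 : 0 ≤ t) (ht : t^2 = (s - c*a)*(s + 3*c*a))
    (hb : b = (s - c*a + t)/(2*c)) :
    s ≤ b ∧ c*(a^2 + a*b + b^2) = s*(a + b) := by
  have hca : c*a ≤ (2/3)*s := by nlinarith
  have hu : 0 < s - c*a := by nlinarith
  have hb' : 2*c*b = s - c*a + t := by rw [hb]; field_simp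
  constructor
  · rcases le_or_gt (2*c*s) (s - c*a) with h | h
    · nlinarith
    · have h1 : (2*c*s - (s - c*a))^2 ≤ t^2 := by
        rw [ht]
        have H1 : (0:ℝ) ≤ (s-a)*(2*a+s) := mul_nonneg (by linarith) (by linarith)
        have H2 : (0:ℝ) ≤ (2/3-c)*(a^2+a*s+s^2) := mul_nonneg (by linarith) (by positivity)
        nlinarith [mul_nonneg hc0.le H1, mul_nonneg hc0.le H2]
      have h2 : 2*c*s - (s - c*a) ≤ t := by nlinarith
      nlinarith
  · have h5 : (4*c) * (c*(a^2 + a*b + b^2)) = (4*c) * (s*(a + b)) := by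
      linear_combination (2*c*b - (s - c*a) + t) * hb' + ht
    exact mul_left_cancel₀ (by positivity) h5

lemma aux_root_strict (c a s b : ℝ) (hc : c < 2/3) (has : a ≤ s) (hs : 0 < s) (hsb : s ≤ b)
    (heq : c*(a^2 + a*b + b^2) = s*(a + b)) : a < b := by
  by_contra h
  push_neg at h
  have ha' : a = s := le_antisymm has (le_trans hsb h)
  have hb2 : b = s := le_antisymm (h.trans_eq ha') hsb
  rw [ha', hb2] at heq
  nlinarith [mul_pos (show (0:ℝ) < 2/3 - c by linarith) (mul_pos hs hs)]

lemma aux_upper (c a s s' t b : ℝ) (hc0 : 0 < c) (hc : c ≤ 2/3) (ha0 : 0 ≤ a) (has : a ≤ s)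
    (hs : 0 < s) (hs' : 0 < s') (ht0 : 0 ≤ t) (ht : t^2 = (s - c*a)*(s + 3*c*a))
    (hb : b = (s - c*a + t)/(2*c)) (hkey : s*(a + s') ≤ c*(a^2 + a*s' + s'^2)) : b ≤ s' := by
  have hca : c*a ≤ (2/3)*s := by nlinarith
  have h1 : s ≤ c*(a + s') := by
    nlinarith [mul_nonneg ha0 (by nlinarith : (0:ℝ) ≤ s - c*a)]
  have hX : 0 ≤ 2*c*s' - (s - c*a) := by nlinarith
  have hsq : t^2 ≤ (2*c*s' - (s - c*a))^2 := by rw [ht]; nlinarith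
  have ht' : t ≤ 2*c*s' - (s - c*a) := by nlinarith
  rw [hb, div_le_iff₀ (by positivity : (0:ℝ) < 2*c)]
  linarith

lemma aux_mono (c p a s s' : ℝ) (hc0 : 0 < c) (hp0 : 0 ≤ p) (hpa : p ≤ a) (hs'0 : 0 < s')
    (hs0 : 0 ≤ s) (hkey : s*(p + s') ≤ c*(p^2 + p*s' + s'^2)) :
    s*(a + s') ≤ c*(a^2 + a*s' + s'^2) := by
  have h2 : 0 < p + s' := by linarith
  have h3 : 0 ≤ c*((a-p)*(a*p + s'*(a+p))) :=
    mul_nonneg hc0.le (mul_nonneg (by linarith)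
      (by nlinarith))
  have h4 : s*(p + s')*(a + s') ≤ c*(p^2 + p*s' + s'^2)*(a + s') :=
    mul_le_mul_of_nonneg_right hkey (by linarith)
  nlinarith [mul_pos h2 h2]



lemma aux_trig (α X : ℝ) (h1 : 0 < α) (h2 : α ≤ π/6) (hX2 : X^2 ≤ (21/40)^2) :
    X^2 * (3*α*Real.cos α + (Real.sin α)^3 - 3*Real.sin α*(Real.cos α)^2) ≤ (Real.sin α)^3 := by
  have hα1 : α ≤ 1 := by nlinarith [Real.pi_le_four]
  have hs1 : α - α^3/4 < Real.sin α := by nlinarith [Real.sin_gt_sub_cube h1, pow_pos h1 3]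
  have hs2 : Real.sin α < α := Real.sin_lt h1
  have hs0 : 0 < Real.sin α := Real.sin_pos_of_pos_of_lt_pi h1 (by nlinarith [Real.pi_gt_three])
  have hcb := Real.cos_bound (by rw [abs_of_pos h1]; exact hα1)
  rw [abs_of_pos h1] at hcb
  have hc2 : Real.cos α ≤ 1 - α^2/2 + α^4*(5/96) := by
    have := abs_le.1 hcb
    linarith [this.1, this.2]
  have hα2 : α^2 ≤ 1 := by nlinarith
  have h5 : α^5 ≤ α^3 := by nlinarith [pow_pos h1 3, pow_pos h1 5, sq_nonneg α]
  have hA3 : (Real.sin α)^3 ≤ α^3 := pow_le_pow_left₀ hs0.le hs2.le 3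
  have hA3pos : 0 < (Real.sin α)^3 := pow_pos hs0 3
  -- key : 1323*(sin α − α cos α) ≥ 164 α^3
  have hkey : 164*α^3 ≤ 1323*(Real.sin α - α*Real.cos α) := by
    have hac : α*Real.cos α ≤ α*(1 - α^2/2 + α^4*(5/96)) :=
      mul_le_mul_of_nonneg_left hc2 h1.le
    have : α - α^3/4 - (α - α^3/2 + α^5*(5/96)) ≤ Real.sin α - α*Real.cos α := by
      have : α*(1 - α^2/2 + α^4*(5/96)) = α - α^3/2 + α^5*(5/96) := by ring
      nlinarith
    nlinarith
  have hpy : (Real.cos α)^2 = 1 - (Real.sin α)^2 := by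
    nlinarith [Real.sin_sq_add_cos_sq α]
  rw [hpy]
  -- K = 3 α cos α + A^3 − 3A(1−A^2) = 3(α cos α − A) + 4A^3 − ... bound
  have hK : 3*α*Real.cos α + (Real.sin α)^3 - 3*Real.sin α*(1 - (Real.sin α)^2)
      ≤ (1600/441)*(Real.sin α)^3 := by nlinarith
  rcases le_or_gt (3*α*Real.cos α + (Real.sin α)^3 - 3*Real.sin α*(1 - (Real.sin α)^2)) 0 with hK0 | hK0
  · nlinarith [sq_nonneg X]
  · have := mul_le_mul_of_nonneg_right (le_trans hX2 (by norm_num : ((21:ℝ)/40)^2 ≤ 441/1600)) hK0.le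
    nlinarith

lemma aux_keyineq (α x ρ : ℝ) (h1 : 0 < α) (h2 : α ≤ π/6) (hρ : 0 < ρ)
    (hX : Real.sin x ≤ 21/40) (hX0 : 0 ≤ Real.sin x) :
    2*ρ*Real.sin x * (2*ρ*Real.sin (x - α) + 2*ρ*Real.sin (x + α)) ≤
      (2*Real.sin α/(3*α)) * ((2*ρ*Real.sin (x-α))^2 + (2*ρ*Real.sin (x-α))*(2*ρ*Real.sin (x+α))
        + (2*ρ*Real.sin (x+α))^2) := by
  have hX2 : (Real.sin x)^2 ≤ (21/40)^2 := by nlinarith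
  have ht := aux_trig α (Real.sin x) h1 h2 hX2
  have hpyx : (Real.sin x)^2 + (Real.cos x)^2 = 1 := Real.sin_sq_add_cos_sq x
  rw [Real.sin_sub, Real.sin_add]
  set A := Real.sin α with hA
  set B := Real.cos α with hB
  set X := Real.sin x with hXd
  set Y := Real.cos x with hY
  rw [div_mul_eq_mul_div, le_div_iff₀ (by positivity : (0:ℝ) < 3*α)]
  have h8 : 0 ≤ 8*ρ^2*(A^3 - X^2*(3*α*B + A^3 - 3*A*B^2)) := by
    have : 0 ≤ A^3 - X^2*(3*α*B + A^3 - 3*A*B^2) := by nlinarith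
    positivity
  have hid : 2*A*((2*ρ*(X*B - Y*A))^2 + (2*ρ*(X*B - Y*A))*(2*ρ*(X*B + Y*A)) + (2*ρ*(X*B + Y*A))^2)
      - 2*ρ*X*(2*ρ*(X*B - Y*A) + 2*ρ*(X*B + Y*A))*(3*α)
      = 8*ρ^2*(A^3 - X^2*(3*α*B + A^3 - 3*A*B^2)) + 8*ρ^2*A^3*(X^2 + Y^2 - 1) := by ring
  have h9 : X^2 + Y^2 - 1 = 0 := by linarith
  rw [h9, mul_zero, add_zero] at hid
  linarith [h8, hid]



lemma polar_symm_eq (p : ℝ × ℝ) :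
    Complex.polarCoord.symm p = (p.1 : ℂ) * Complex.exp (Complex.I * (p.2 : ℂ)) := by
  rw [Complex.polarCoord_symm_apply, mul_comm Complex.I, Complex.exp_mul_I]
  push_cast
  ring

lemma polar_setIntegral {E : Type*} [NormedAddCommGroup E] [NormedSpace ℝ E]
    (f : ℂ → E) (a b α : ℝ) (ha : 0 ≤ a) (hα : 0 < α) (hαπ : α < π) :
    ∫ z in Complex.polarCoord.symm '' (Set.Ioo a b ×ˢ Set.Ioo (-α) α), f z
      = ∫ p in Set.Ioo a b ×ˢ Set.Ioo (-α) α, p.1 • f (Complex.polarCoord.symm p) := by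
  set T : Set (ℝ × ℝ) := Set.Ioo a b ×ˢ Set.Ioo (-α) α with hT
  have hTsub : T ⊆ Complex.polarCoord.target := by
    rw [Complex.polarCoord_target]
    rintro ⟨r, θ⟩ ⟨⟨h1, h2⟩, h3, h4⟩
    exact ⟨lt_of_le_of_lt ha h1, by constructor <;> [linarith; linarith]⟩
  have hTo : IsOpen T := isOpen_Ioo.prod isOpen_Ioo
  have hTm : MeasurableSet T := hTo.measurableSet
  have hSo : IsOpen (Complex.polarCoord.symm '' T) :=
    Complex.polarCoord.isOpen_image_symm_of_subset_target hTo hTsub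
  have hSm : MeasurableSet (Complex.polarCoord.symm '' T) := hSo.measurableSet
  calc ∫ z in Complex.polarCoord.symm '' T, f z
      = ∫ z, (Complex.polarCoord.symm '' T).indicator f z := (integral_indicator hSm).symm
    _ = ∫ p in Complex.polarCoord.target,
          p.1 • ((Complex.polarCoord.symm '' T).indicator f) (Complex.polarCoord.symm p) :=
        (Complex.integral_comp_polarCoord_symm _).symm
    _ = ∫ p in Complex.polarCoord.target,
          T.indicator (fun p : ℝ × ℝ => p.1 • f (Complex.polarCoord.symm p)) p := by
        apply setIntegral_congr_fun Complex.polarCoord.open_target.measurableSet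
        intro p hp
        dsimp only
        by_cases hpT : p ∈ T
        · rw [Set.indicator_of_mem hpT, Set.indicator_of_mem (Set.mem_image_of_mem _ hpT)]
        · rw [Set.indicator_of_notMem hpT, Set.indicator_of_notMem, smul_zero]
          rintro ⟨q, hq, he⟩
          exact hpT (by
            have : q = p := Complex.polarCoord.symm.injOn (by simpa using hTsub hq) (by simpa using hp) he
            rwa [← this])
    _ = ∫ p in Complex.polarCoord.target ∩ T,
          p.1 • f (Complex.polarCoord.symm p) := setIntegral_indicator hTm
    _ = ∫ p in T, p.1 • f (Complex.polarCoord.symm p) := by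
        rw [Set.inter_eq_self_of_subset_right hTsub]




lemma sector_eq (a b α φ : ℝ) (ha : 0 ≤ a) (hα : 0 < α) (hαπ : α < π) :
    {z : ℂ | ∃ rr θ : ℝ, a < rr ∧ rr < b ∧ |θ - φ| < α ∧
        z = (rr : ℂ) * Complex.exp (Complex.I * (θ : ℂ))}
      = (fun z : ℂ => Complex.exp (Complex.I * (φ:ℂ)) * z) ''
          (Complex.polarCoord.symm '' (Set.Ioo a b ×ˢ Set.Ioo (-α) α)) := by
  ext z
  simp only [Set.mem_setOf_eq, Set.mem_image, Prod.exists]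
  constructor
  · rintro ⟨rr, θ, h1, h2, h3, rfl⟩
    have habs := abs_lt.1 h3
    refine ⟨Complex.polarCoord.symm (rr, θ - φ), ⟨rr, θ - φ,
      ⟨⟨h1, h2⟩, ⟨by simpa using habs.1, by simpa using habs.2⟩⟩, rfl⟩, ?_⟩
    rw [polar_symm_eq]
    have he : Complex.exp (Complex.I * (φ:ℂ)) * Complex.exp (Complex.I * ((θ:ℂ) - (φ:ℂ)))
        = Complex.exp (Complex.I * (θ:ℂ)) := by
      rw [← Complex.exp_add]; ring_nf
    push_cast
    linear_combination (rr:ℂ) * he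
  · rintro ⟨w, ⟨rr, ψ, ⟨⟨h1, h2⟩, h3, h4⟩, rfl⟩, rfl⟩
    refine ⟨rr, ψ + φ, h1, h2, ?_, ?_⟩
    · rw [add_sub_cancel_right]; exact abs_lt.2 ⟨h3, h4⟩
    · rw [polar_symm_eq]
      have he : Complex.exp (Complex.I * (φ:ℂ)) * Complex.exp (Complex.I * (ψ:ℂ))
          = Complex.exp (Complex.I * ((ψ:ℂ) + (φ:ℂ))) := by
        rw [← Complex.exp_add]; ring_nf
      push_cast
      linear_combination (rr:ℂ) * he

lemma sector_centroid (a b α φ sv : ℝ) (ha : 0 ≤ a) (hab : a < b) (hα : 0 < α) (hαπ : α < π)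
    (hkey : 2*Real.sin α*(b^3 - a^3) = 3*α*sv*(b^2 - a^2)) :
    (volume {z : ℂ | ∃ rr θ : ℝ, a < rr ∧ rr < b ∧ |θ - φ| < α ∧
        z = (rr : ℂ) * Complex.exp (Complex.I * (θ : ℂ))}).toReal⁻¹ •
      (∫ z in {z : ℂ | ∃ rr θ : ℝ, a < rr ∧ rr < b ∧ |θ - φ| < α ∧
        z = (rr : ℂ) * Complex.exp (Complex.I * (θ : ℂ))}, z)
      = (sv:ℂ) * Complex.exp (Complex.I * (φ:ℂ)) := by
  rw [sector_eq a b α φ ha hα hαπ]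
  set T : Set (ℝ × ℝ) := Set.Ioo a b ×ˢ Set.Ioo (-α) α with hT
  set S₀ : Set ℂ := Complex.polarCoord.symm '' T with hS₀
  have hfun : (fun z : ℂ => Complex.exp (Complex.I * (φ:ℂ)) * z) = ⇑(rotation (Circle.exp φ)) := by
    funext z
    rw [rotation_apply, Circle.coe_exp, mul_comm (φ:ℂ) Complex.I]
  rw [hfun]
  have hmp : MeasurePreserving (⇑(rotation (Circle.exp φ))) volume volume :=
    (rotation (Circle.exp φ)).measurePreserving
  have hemb : MeasurableEmbedding (⇑(rotation (Circle.exp φ))) :=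
    (rotation (Circle.exp φ)).toHomeomorph.measurableEmbedding
  have hTm : MeasurableSet T := (isOpen_Ioo.prod isOpen_Ioo).measurableSet
  -- volume computation
  have hIoo1 : ∫ x in Set.Ioo a b, (x:ℝ) = (b^2 - a^2)/2 := by
    rw [← integral_Ioc_eq_integral_Ioo, ← intervalIntegral.integral_of_le hab.le,
      _root_.integral_id]
  have hIoo2 : ∫ y in Set.Ioo (-α) α, (1:ℝ) = 2*α := by
    rw [setIntegral_const, smul_eq_mul, mul_one, measureReal_def, Real.volume_Ioo,
      ENNReal.toReal_ofReal (by linarith)]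
    ring
  have hvol : (volume (⇑(rotation (Circle.exp φ)) '' S₀)).toReal = α*(b^2 - a^2) := by
    have h1 : (volume (⇑(rotation (Circle.exp φ)) '' S₀)).toReal
        = ∫ z in ⇑(rotation (Circle.exp φ)) '' S₀, (1:ℝ) := by
      rw [setIntegral_const]; simp; rfl
    rw [h1, hmp.setIntegral_image_emb hemb, hS₀,
      polar_setIntegral (fun _ => (1:ℝ)) a b α ha hα hαπ]
    have h2 : ∫ p in T, p.1 • (1:ℝ) = ∫ p in T, p.1 := by
      simp [smul_eq_mul]
    rw [h2, hT, MeasureTheory.Measure.volume_eq_prod]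
    have h3 := setIntegral_prod_mul (μ := volume) (ν := volume)
      (fun x : ℝ => x) (fun _ : ℝ => (1:ℝ)) (Set.Ioo a b) (Set.Ioo (-α) α)
    simp only [mul_one] at h3
    rw [h3, hIoo1, hIoo2]
    ring
  -- integral computation
  have hsinint : ∫ y in Set.Ioo (-α) α, Complex.exp (Complex.I * (y:ℂ))
      = ((2*Real.sin α : ℝ) : ℂ) := by
    rw [← integral_Ioc_eq_integral_Ioo, ← intervalIntegral.integral_of_le (by linarith : -α ≤ α),
      _root_.integral_exp_mul_complex Complex.I_ne_zero]
    rw [mul_comm Complex.I, mul_comm Complex.I, Complex.exp_mul_I, Complex.exp_mul_I]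
    push_cast
    rw [Complex.cos_neg, Complex.sin_neg]
    have hI : Complex.I ≠ 0 := Complex.I_ne_zero
    field_simp
    linear_combination
  have hint : (∫ z in ⇑(rotation (Circle.exp φ)) '' S₀, z)
      = (((2*Real.sin α*(b^3 - a^3)/3 : ℝ)):ℂ) * Complex.exp (Complex.I*(φ:ℂ)) := by
    rw [hmp.setIntegral_image_emb hemb]
    have h0 : ∫ x in S₀, ⇑(rotation (Circle.exp φ)) x
        = ∫ x in S₀, Complex.exp (Complex.I * (φ:ℂ)) * x := by rw [← hfun]
    rw [h0, hS₀, polar_setIntegral (fun z => Complex.exp (Complex.I * (φ:ℂ)) * z) a b α ha hα hαπ]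
    have h2 : ∫ p in T, p.1 • (Complex.exp (Complex.I * (φ:ℂ)) * Complex.polarCoord.symm p)
        = ∫ p in T, ((p.1:ℂ))^2 * (Complex.exp (Complex.I * (φ:ℂ))
            * Complex.exp (Complex.I * ((p.2 : ℝ):ℂ))) := by
      apply setIntegral_congr_fun hTm
      intro p _
      dsimp only
      rw [polar_symm_eq, Complex.real_smul]
      ring
    rw [h2, hT, MeasureTheory.Measure.volume_eq_prod]
    have h3 := setIntegral_prod_mul (μ := volume) (ν := volume)
      (fun x : ℝ => ((x:ℂ))^2)
      (fun y : ℝ => Complex.exp (Complex.I * (φ:ℂ)) * Complex.exp (Complex.I * (y:ℂ)))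
      (Set.Ioo a b) (Set.Ioo (-α) α)
    rw [h3]
    have h4 : ∫ x in Set.Ioo a b, ((x:ℂ))^2 = (((b^3 - a^3)/3 : ℝ) : ℂ) := by
      rw [← integral_Ioc_eq_integral_Ioo, ← intervalIntegral.integral_of_le hab.le]
      have : ∀ x : ℝ, ((x:ℂ))^2 = ((x^2 : ℝ) : ℂ) := by intro x; push_cast; ring
      simp_rw [this]
      rw [intervalIntegral.integral_ofReal, _root_.integral_pow]
      norm_num
    have h5 : ∫ y in Set.Ioo (-α) α, Complex.exp (Complex.I * (φ:ℂ))
        * Complex.exp (Complex.I * (y:ℂ))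
        = Complex.exp (Complex.I * (φ:ℂ)) * ((2*Real.sin α : ℝ) : ℂ) := by
      rw [integral_const_mul, hsinint]
    rw [h4, h5]
    push_cast
    ring
  rw [hvol, hint]
  have hb2 : (0:ℝ) < α*(b^2 - a^2) := by
    have : a^2 < b^2 := by nlinarith
    nlinarith
  have hkC : ((2:ℂ)*(Complex.sin (α:ℂ))*((b:ℂ)^3 - (a:ℂ)^3)) = 3*(α:ℂ)*(sv:ℂ)*((b:ℂ)^2 - (a:ℂ)^2) := by
    have := congrArg (fun x : ℝ => (x : ℂ)) hkey
    push_cast at this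
    exact this
  rw [Complex.real_smul]
  push_cast
  have hne : ((α:ℂ)*((b:ℂ)^2 - (a:ℂ)^2)) ≠ 0 := by
    intro h
    have : ((α*(b^2 - a^2) : ℝ) : ℂ) = 0 := by push_cast; linear_combination h
    rw [Complex.ofReal_eq_zero] at this
    linarith
  rw [inv_mul_eq_iff_eq_mul₀ hne]
  linear_combination (Complex.exp (Complex.I*(φ:ℂ)) / 3) * hkC


/-- The open annular sector `{r e^{iθ} : r_j < r < r_{j+1}, |θ − (j+2ℓ)π/m| < π/m} ⊆ ℂ`. -/
def circSector (r : ℕ → ℝ) (m j l : ℕ) : Set ℂ :=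
  {z : ℂ | ∃ rr θ : ℝ, r j < rr ∧ rr < r (j + 1) ∧
    |θ - ((j : ℝ) + 2 * l) * π / m| < π / m ∧
    z = (rr : ℂ) * Complex.exp (Complex.I * (θ : ℂ))}

def sfun (m : ℕ) (ρ : ℝ) (j : ℕ) : ℝ := 2 * ρ * Real.sin ((j : ℝ) * π / m)

def cconst (m : ℕ) : ℝ := 2 * Real.sin (π / m) / (3 * (π / m))

def gfun (c x y : ℝ) : ℝ := (y - c*x + Real.sqrt ((y - c*x)*(y + 3*c*x)))/(2*c)

def rfun (m : ℕ) (ρ : ℝ) : ℕ → ℝ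
  | 0 => 0
  | (j+1) => if 1 ≤ j ∧ j ≤ m/2 then
      (if sfun m ρ j ≤ 21/20*ρ then gfun (cconst m) (rfun m ρ j) (sfun m ρ j)
       else if j+1 ≤ m/2 then sfun m ρ (j+1) else sfun m ρ j)
      else rfun m ρ j

set_option maxHeartbeats 2000000 in
/-- **Existence of centroid-respecting radii for the circular covering.** -/
theorem circular_radii_exist :
    ∃ Θ : ℝ, 1 < Θ ∧
      ∀ m : ℕ, Even m → 6 ≤ m → ∀ ρ : ℝ, 0 < ρ →
        ∃ r : ℕ → ℝ,
          r 0 = 0 ∧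
          (∀ j : ℕ, j + 1 ≤ m / 2 + 1 → r j ≤ r (j + 1)) ∧
          (∀ j : ℕ, 1 ≤ j → j ≤ m / 2 →
            r j ≤ 2 * ρ * Real.sin ((j : ℝ) * π / m) ∧
            2 * ρ * Real.sin ((j : ℝ) * π / m) ≤ r (j + 1)) ∧
          (∀ j : ℕ, 1 ≤ j → j ≤ m / 2 → ∀ l : ℕ, 1 ≤ l → l ≤ m →
            2 * ρ * Real.sin ((j : ℝ) * π / m) ≤ Θ * ρ →
            (volume (circSector r m j l)).toReal⁻¹ • (∫ z in circSector r m j l, z) =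
              ((2 * ρ * Real.sin ((j : ℝ) * π / m) : ℝ) : ℂ) *
                Complex.exp (Complex.I * ((((j : ℝ) + 2 * l) * π / m : ℝ) : ℂ))) := by
  classical
  refine ⟨21/20, by norm_num, ?_⟩
  intro m hEven hm6 ρ hρ
  have hm6' : (6:ℝ) ≤ m := by exact_mod_cast hm6
  have hm0 : (0:ℝ) < m := by linarith
  have hα0 : 0 < π/(m:ℝ) := div_pos Real.pi_pos hm0
  have hα6 : π/(m:ℝ) ≤ π/6 := by
    rw [div_le_div_iff₀ hm0 (by norm_num : (0:ℝ) < 6)]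
    nlinarith [Real.pi_pos]
  have hαπ : π/(m:ℝ) < π := by
    rw [div_lt_iff₀ hm0]
    nlinarith [Real.pi_pos]
  have hsinα : 0 < Real.sin (π/(m:ℝ)) := Real.sin_pos_of_pos_of_lt_pi hα0 hαπ
  have hc0 : 0 < cconst m := by rw [cconst]; positivity
  have hclt : cconst m < 2/3 := by
    rw [cconst, div_lt_iff₀ (by positivity)]
    nlinarith [Real.sin_lt hα0]
  have hcm : 3*(π/(m:ℝ))*(cconst m) = 2*Real.sin (π/(m:ℝ)) := by
    rw [cconst]; field_simp
  have hKk : ((m/2 : ℕ):ℝ)*2 = (m:ℝ) := by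
    obtain ⟨k, hk⟩ := hEven
    have h2 : m/2 = k := by omega
    rw [h2]
    push_cast [hk]
    ring
  have hsnn : ∀ j : ℕ, j ≤ m → 0 ≤ sfun m ρ j := by
    intro j hj
    have hj' : ((j:ℕ):ℝ) ≤ m := by exact_mod_cast hj
    have h1 : 0 ≤ (j:ℝ)*π/m := by positivity
    have h2 : (j:ℝ)*π/m ≤ π := by
      rw [div_le_iff₀ hm0]
      nlinarith [Real.pi_pos]
    exact mul_nonneg (by positivity) (Real.sin_nonneg_of_nonneg_of_le_pi h1 h2)
  have hspos : ∀ j : ℕ, 1 ≤ j → j < m → 0 < sfun m ρ j := by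
    intro j h1 h2
    have h1' : (1:ℝ) ≤ j := by exact_mod_cast h1
    have h2' : (j:ℝ) < m := by exact_mod_cast h2
    have ha : 0 < (j:ℝ)*π/m := div_pos (mul_pos (by linarith) Real.pi_pos) hm0
    have hb : (j:ℝ)*π/m < π := by
      rw [div_lt_iff₀ hm0]
      nlinarith [Real.pi_pos]
    exact mul_pos (by positivity) (Real.sin_pos_of_pos_of_lt_pi ha hb)
  have hshalf : ∀ j : ℕ, j ≤ m/2 → (j:ℝ)*π/m ≤ π/2 := by
    intro j hj
    have h1 : (j:ℝ) ≤ ((m/2:ℕ):ℝ) := by exact_mod_cast hj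
    rw [div_le_div_iff₀ hm0 (by norm_num : (0:ℝ) < 2)]
    nlinarith [Real.pi_pos]
  have hsmono : ∀ i j : ℕ, i ≤ j → j ≤ m/2 → sfun m ρ i ≤ sfun m ρ j := by
    intro i j hij hj
    have hij' : (i:ℝ) ≤ j := by exact_mod_cast hij
    have h1 : (i:ℝ)*π/m ≤ (j:ℝ)*π/m := by gcongr
    have h2 := hshalf j hj
    have h0 : 0 ≤ (i:ℝ)*π/m := by positivity
    have h3 : Real.sin ((i:ℝ)*π/m) ≤ Real.sin ((j:ℝ)*π/m) := by
      apply Real.strictMonoOn_sin.monotoneOn ⟨by linarith [Real.pi_pos], by linarith⟩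
        ⟨by linarith [Real.pi_pos], h2⟩ h1
    exact mul_le_mul_of_nonneg_left h3 (by positivity)
  have hstep : ∀ j : ℕ, 1 ≤ j → j ≤ m/2 → sfun m ρ (j-1) ≤ rfun m ρ j → rfun m ρ j ≤ sfun m ρ j →
      sfun m ρ j ≤ rfun m ρ (j+1) ∧
      ((j+1 ≤ m/2 ∨ sfun m ρ j ≤ 21/20*ρ) → rfun m ρ (j+1) ≤ sfun m ρ (j+1)) := by
    intro j hj1 hjK hlow hup
    have hrj1 : rfun m ρ (j+1) = if sfun m ρ j ≤ 21/20*ρ then gfun (cconst m) (rfun m ρ j) (sfun m ρ j)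
        else if j+1 ≤ m/2 then sfun m ρ (j+1) else sfun m ρ j := by
      rw [rfun, if_pos (⟨hj1, hjK⟩ : 1 ≤ j ∧ j ≤ m/2)]
    by_cases hact : sfun m ρ j ≤ 21/20*ρ
    · rw [hrj1, if_pos hact]
      have hsj : 0 < sfun m ρ j := hspos j hj1 (by omega)
      have ha0 : 0 ≤ rfun m ρ j := le_trans (hsnn (j-1) (by omega)) hlow
      have hprod : 0 ≤ (sfun m ρ j - (cconst m)*(rfun m ρ j))*(sfun m ρ j + 3*(cconst m)*(rfun m ρ j)) := by
        have h1 : (cconst m)*(rfun m ρ j) ≤ sfun m ρ j := by nlinarith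
        apply mul_nonneg <;> nlinarith [mul_nonneg hc0.le ha0]
      have ht := Real.sq_sqrt hprod
      have ht0 := Real.sqrt_nonneg ((sfun m ρ j - (cconst m)*(rfun m ρ j))*(sfun m ρ j + 3*(cconst m)*(rfun m ρ j)))
      have hbdef : gfun (cconst m) (rfun m ρ j) (sfun m ρ j)
          = (sfun m ρ j - (cconst m)*(rfun m ρ j) + Real.sqrt ((sfun m ρ j - (cconst m)*(rfun m ρ j))*(sfun m ρ j + 3*(cconst m)*(rfun m ρ j))))/(2*(cconst m)) := rfl
      obtain ⟨hsb, heq⟩ := aux_root (cconst m) (rfun m ρ j) (sfun m ρ j) _ _ hc0 hclt.le ha0 hup hsj ht0 ht hbdef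
      refine ⟨hsb, fun _ => ?_⟩
      have hXle : Real.sin ((j:ℝ)*π/m) ≤ 21/40 := by
        have h := hact
        rw [sfun] at h
        nlinarith
      have hX0 : 0 ≤ Real.sin ((j:ℝ)*π/m) := by
        have h := hsnn j (by omega)
        rw [sfun] at h
        nlinarith
      have hk1 := aux_keyineq (π/(m:ℝ)) ((j:ℝ)*π/m) ρ hα0 hα6 hρ hXle hX0
      have e1 : (j:ℝ)*π/(m:ℝ) - π/(m:ℝ) = ((j-1 : ℕ):ℝ)*π/(m:ℝ) := by
        rw [Nat.cast_sub hj1]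
        push_cast
        ring
      have e2 : (j:ℝ)*π/(m:ℝ) + π/(m:ℝ) = ((j+1 : ℕ):ℝ)*π/(m:ℝ) := by
        push_cast
        ring
      rw [e1, e2] at hk1
      have hk1' : sfun m ρ j * (sfun m ρ (j-1) + sfun m ρ (j+1)) ≤
          (cconst m) * ((sfun m ρ (j-1))^2 + sfun m ρ (j-1) * sfun m ρ (j+1) + (sfun m ρ (j+1))^2) := by
        rw [cconst]
        simp only [sfun]
        exact hk1
      have hmono := aux_mono (cconst m) (sfun m ρ (j-1)) (rfun m ρ j) (sfun m ρ j) (sfun m ρ (j+1))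
        hc0 (hsnn (j-1) (by omega)) hlow (hspos (j+1) (by omega) (by omega)) hsj.le hk1'
      exact aux_upper (cconst m) (rfun m ρ j) (sfun m ρ j) (sfun m ρ (j+1)) _ _ hc0 hclt.le ha0 hup
        hsj (hspos (j+1) (by omega) (by omega)) ht0 ht hbdef hmono
    · rw [hrj1, if_neg hact]
      by_cases hj2 : j+1 ≤ m/2
      · rw [if_pos hj2]
        exact ⟨hsmono j (j+1) (by omega) hj2, fun _ => le_refl _⟩
      · rw [if_neg hj2]
        refine ⟨le_refl _, fun hor => ?_⟩
        rcases hor with h | h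
        · exact absurd h hj2
        · exact absurd h hact
  have hinv : ∀ j : ℕ, 1 ≤ j → j ≤ m/2 → sfun m ρ (j-1) ≤ rfun m ρ j ∧ rfun m ρ j ≤ sfun m ρ j := by
    intro j
    induction j with
    | zero => omega
    | succ n ih =>
      intro _ hn1
      rcases Nat.eq_zero_or_pos n with hn0 | hn0
      · subst hn0
        have hr1 : rfun m ρ 1 = 0 := by
          show rfun m ρ (0+1) = 0
          conv_lhs => rw [rfun]
          rw [if_neg (by omega : ¬(1 ≤ 0 ∧ 0 ≤ m/2)), rfun]
        have hs0 : sfun m ρ 0 = 0 := by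
          simp [sfun]
        refine ⟨?_, ?_⟩
        · simp only [Nat.sub_self]
          rw [hr1, hs0]
        · rw [hr1]
          exact hsnn 1 (by omega)
      · have hnK : n ≤ m/2 := by omega
        obtain ⟨hl, hu⟩ := ih (by omega) hnK
        obtain ⟨h1, h2⟩ := hstep n (by omega) hnK hl hu
        refine ⟨by simpa using h1, h2 (Or.inl hn1)⟩
  refine ⟨rfun m ρ, rfl, ?_, ?_, ?_⟩
  · intro j hj
    rcases Nat.eq_zero_or_pos j with h0 | h0
    · subst h0
      have h : rfun m ρ 1 = rfun m ρ 0 := by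
        show rfun m ρ (0+1) = rfun m ρ 0
        conv_lhs => rw [rfun]
        rw [if_neg (by omega : ¬(1 ≤ 0 ∧ 0 ≤ m/2))]
      exact le_of_eq h.symm
    · have hjK : j ≤ m/2 := by omega
      obtain ⟨hl, hu⟩ := hinv j h0 hjK
      obtain ⟨h1, _⟩ := hstep j h0 hjK hl hu
      exact le_trans hu h1
  · intro j hj1 hjK
    obtain ⟨hl, hu⟩ := hinv j hj1 hjK
    obtain ⟨h1, _⟩ := hstep j hj1 hjK hl hu
    exact ⟨hu, h1⟩
  · intro j hj1 hjK l hl1 hlm hact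
    obtain ⟨hl, hu⟩ := hinv j hj1 hjK
    have hact' : sfun m ρ j ≤ 21/20*ρ := hact
    have hsj : 0 < sfun m ρ j := hspos j hj1 (by omega)
    have ha0 : 0 ≤ rfun m ρ j := le_trans (hsnn (j-1) (by omega)) hl
    have hprod : 0 ≤ (sfun m ρ j - (cconst m)*(rfun m ρ j))*(sfun m ρ j + 3*(cconst m)*(rfun m ρ j)) := by
      have h1 : (cconst m)*(rfun m ρ j) ≤ sfun m ρ j := by nlinarith
      apply mul_nonneg <;> nlinarith [mul_nonneg hc0.le ha0]
    have ht := Real.sq_sqrt hprod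
    have ht0 := Real.sqrt_nonneg ((sfun m ρ j - (cconst m)*(rfun m ρ j))*(sfun m ρ j + 3*(cconst m)*(rfun m ρ j)))
    have hbdef : gfun (cconst m) (rfun m ρ j) (sfun m ρ j)
        = (sfun m ρ j - (cconst m)*(rfun m ρ j) + Real.sqrt ((sfun m ρ j - (cconst m)*(rfun m ρ j))*(sfun m ρ j + 3*(cconst m)*(rfun m ρ j))))/(2*(cconst m)) := rfl
    obtain ⟨hsb, heq⟩ := aux_root (cconst m) (rfun m ρ j) (sfun m ρ j) _ _ hc0 hclt.le ha0 hu hsj ht0 ht hbdef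
    have hstrict : rfun m ρ j < gfun (cconst m) (rfun m ρ j) (sfun m ρ j) :=
      aux_root_strict (cconst m) (rfun m ρ j) (sfun m ρ j) _ hclt hu hsj hsb heq
    have hrj1 : rfun m ρ (j+1) = gfun (cconst m) (rfun m ρ j) (sfun m ρ j) := by
      rw [rfun, if_pos (⟨hj1, hjK⟩ : 1 ≤ j ∧ j ≤ m/2), if_pos hact']
    have hab : rfun m ρ j < rfun m ρ (j+1) := by
      rw [hrj1]
      exact hstrict
    have hkey : 2*Real.sin (π/(m:ℝ))*((rfun m ρ (j+1))^3 - (rfun m ρ j)^3)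
        = 3*(π/(m:ℝ))*(2*ρ*Real.sin ((j:ℝ)*π/(m:ℝ)))*((rfun m ρ (j+1))^2 - (rfun m ρ j)^2) := by
      have heq' : (cconst m)*((rfun m ρ j)^2 + (rfun m ρ j)*(rfun m ρ (j+1)) + (rfun m ρ (j+1))^2)
          = (sfun m ρ j)*(rfun m ρ j + rfun m ρ (j+1)) := by
        rw [hrj1]
        exact heq
      have hsv : sfun m ρ j = 2*ρ*Real.sin ((j:ℝ)*π/(m:ℝ)) := rfl
      rw [← hsv]
      linear_combination 3*(π/(m:ℝ))*(rfun m ρ (j+1) - rfun m ρ j)*heq' -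
        ((rfun m ρ (j+1))^3 - (rfun m ρ j)^3)*hcm
    exact sector_centroid (rfun m ρ j) (rfun m ρ (j+1)) (π/(m:ℝ)) (((j:ℝ) + 2*l)*π/(m:ℝ))
      (2*ρ*Real.sin ((j:ℝ)*π/(m:ℝ))) ha0 hab hα0 hαπ hkey

end
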